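/- In A(R), the row and column expansions of the quantum determinant agree: Σ_{σ∈Sₙ} (−s)^{ℓ(σ)} t_{σ(1),1}⋯t_{σ(n),n} = Σ_{σ∈Sₙ} (−r)^{−ℓ(σ)} t_{1,σ(1)}⋯t_{n,σ(n)}. -/

import Mathlib

noncomputable def Rmat (n : ℕ) (r s : ℂ) :
    Matrix (Fin n × Fin n) (Fin n × Fin n) ℂ := fun p q =>
  (if q = p then (if p.1 = p.2 then s else if p.2 < p.1 then r * s else 1) else 0)
    + (if q = (p.2, p.1) ∧ p.2 < p.1 then s - r else 0)

/-- The length (number of inversions) of a permutation of `Fin n`. -/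
def invNum {n : ℕ} (σ : Equiv.Perm (Fin n)) : ℕ :=
  (Finset.univ.filter fun p : Fin n × Fin n => p.1 < p.2 ∧ σ p.2 < σ p.1).card

/-- The ordered product `t_{σ(1),η(1)} ⋯ t_{σ(n),η(n)}` in a (noncommutative)
algebra. -/
def prodT {A : Type*} [Ring A] {n : ℕ} (t : Fin n → Fin n → A)
    (σ η : Fin n → Fin n) : A :=
  ((List.finRange n).map fun i => t (σ i) (η i)).prod

/-- Explicit quadratic relation form of the RTT relations. -/
def QRel {A : Type*} [Ring A] [Algebra ℂ A] (r s : ℂ) {n : ℕ}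
    (t : Fin n → Fin n → A) : Prop :=
  ∀ i j k l : Fin n,
    (if i = j then s else if j < i then r * s else 1) • (t i k * t j l)
      + (if j < i then s - r else 0) • (t j k * t i l)
    = (if k = l then s else if l < k then r * s else 1) • (t j l * t i k)
      + (if k < l then s - r else 0) • (t j k * t i l)

section aux
variable {A : Type*} [Ring A] [Algebra ℂ A]

lemma sum_pair_smul {n : ℕ} (c : ℂ) (p : Fin n × Fin n) (f : Fin n → Fin n → A) :
    (∑ a : Fin n, ∑ b : Fin n, (if (a, b) = p then c else 0) • f a b)
      = c • f p.1 p.2 := by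
  rw [← Finset.sum_product']
  have : (∑ x ∈ Finset.univ ×ˢ Finset.univ,
      (if x = p then c else 0) • f x.1 x.2)
      = ∑ x ∈ Finset.univ ×ˢ Finset.univ,
        (if x = p then c • f x.1 x.2 else 0) := by
    refine Finset.sum_congr rfl fun x _ => ?_
    split <;> simp
  rw [this, Finset.sum_ite_eq' _ p]
  simp

lemma qrel_of_hRTT {n : ℕ} (r s : ℂ) (t : Fin n → Fin n → A)
    (hRTT : ∀ i j k l : Fin n,
      ∑ a : Fin n, ∑ b : Fin n, Rmat n r s (i, j) (a, b) • (t a k * t b l)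
        = ∑ a : Fin n, ∑ b : Fin n, Rmat n r s (a, b) (k, l) • (t j b * t i a)) :
    QRel r s t := by
  intro i j k l
  have h := hRTT i j k l
  have hL : (∑ a : Fin n, ∑ b : Fin n, Rmat n r s (i, j) (a, b) • (t a k * t b l))
      = (if i = j then s else if j < i then r * s else 1) • (t i k * t j l)
        + (if j < i then s - r else 0) • (t j k * t i l) := by
    have e1 : ∀ a b : Fin n, Rmat n r s (i, j) (a, b) • (t a k * t b l)
        = (if (a, b) = (i, j) then (if i = j then s else if j < i then r * s else 1) else 0)
            • (t a k * t b l)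
          + (if (a, b) = (j, i) then (if j < i then s - r else 0) else 0) • (t a k * t b l) := by
      intro a b
      have c2 : (if (a, b) = (j, i) ∧ j < i then s - r else 0)
          = if (a, b) = (j, i) then (if j < i then s - r else 0) else 0 := by
        by_cases h3 : j < i <;> simp [h3]
      rw [Rmat]
      simp only [add_smul]
      congr 1
      rw [c2]
    simp only [e1, Finset.sum_add_distrib]
    rw [sum_pair_smul, sum_pair_smul]
  have hR : (∑ a : Fin n, ∑ b : Fin n, Rmat n r s (a, b) (k, l) • (t j b * t i a))
      = (if k = l then s else if l < k then r * s else 1) • (t j l * t i k)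
        + (if k < l then s - r else 0) • (t j k * t i l) := by
    have e1 : ∀ a b : Fin n, Rmat n r s (a, b) (k, l) • (t j b * t i a)
        = (if (a, b) = (k, l) then (if k = l then s else if l < k then r * s else 1) else 0)
            • (t j b * t i a)
          + (if (a, b) = (l, k) then (if k < l then s - r else 0) else 0) • (t j b * t i a) := by
      intro a b
      have c1 : (if (k, l) = (a, b) then (if a = b then s else if b < a then r * s else 1) else 0)
          = (if (a, b) = (k, l) then (if k = l then s else if l < k then r * s else 1) else 0) := by
        by_cases hkl : (a, b) = (k, l)
        · rw [Prod.mk.injEq] at hkl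
          obtain ⟨rfl, rfl⟩ := hkl
          simp
        · rw [if_neg hkl, if_neg (fun hab => hkl (by rw [Prod.mk.injEq] at hab ⊢; exact ⟨hab.1.symm, hab.2.symm⟩))]
      have c2 : (if (k, l) = (b, a) ∧ b < a then s - r else 0)
          = (if (a, b) = (l, k) then (if k < l then s - r else 0) else 0) := by
        by_cases hlk : (a, b) = (l, k)
        · rw [Prod.mk.injEq] at hlk
          obtain ⟨rfl, rfl⟩ := hlk
          by_cases hba : b < a <;> simp [hba]
        · have hnc : ¬((k, l) = (b, a) ∧ b < a) := by
            rintro ⟨h1, -⟩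
            rw [Prod.mk.injEq] at h1
            exact hlk (by rw [Prod.mk.injEq]; exact ⟨h1.2.symm, h1.1.symm⟩)
          rw [if_neg hlk, if_neg hnc]
      rw [Rmat]
      simp only [add_smul]
      congr 1
      · rw [← c1]
      · rw [← c2]
    simp only [e1, Finset.sum_add_distrib]
    rw [sum_pair_smul, sum_pair_smul]
  rw [hL, hR] at h
  exact h
end aux

section aux2
variable {A : Type*} [Ring A] [Algebra ℂ A]

lemma qrel_comp {n m : ℕ} {r s : ℂ} {t : Fin n → Fin n → A} (h : QRel r s t)
    {f g : Fin m → Fin n} (hf : StrictMono f) (hg : StrictMono g) :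
    QRel r s (fun a b => t (f a) (g b)) := by
  intro i j k l
  have hh := h (f i) (f j) (g k) (g l)
  simpa only [hf.injective.eq_iff, hg.injective.eq_iff, hf.lt_iff_lt, hg.lt_iff_lt] using hh

lemma qrel_comm {n : ℕ} {r s : ℂ} {t : Fin n → Fin n → A} (h : QRel r s t)
    {a b c d : Fin n} (hab : a < b) (hcd : c < d) :
    t a d * t b c = (r * s) • (t b c * t a d) := by
  have hh := h a b d c
  simp only [if_neg hab.ne, if_neg (not_lt_of_gt hab), if_neg hcd.ne', if_pos hcd,
    if_neg (not_lt_of_gt hcd), zero_smul, add_zero, one_smul] at hh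
  exact hh

/-- invariance of inversion number under inversion -/
lemma invNum_inv {n : ℕ} (σ : Equiv.Perm (Fin n)) : invNum σ⁻¹ = invNum σ := by
  unfold invNum
  apply Finset.card_nbij' (i := fun p => (σ⁻¹ p.2, σ⁻¹ p.1)) (j := fun p => (σ p.2, σ p.1))
  · intro p hp
    simp only [Finset.mem_coe, Finset.mem_filter, Finset.mem_univ, true_and] at hp ⊢
    exact ⟨hp.2, by simpa using hp.1⟩
  · intro p hp
    simp only [Finset.mem_coe, Finset.mem_filter, Finset.mem_univ, true_and] at hp ⊢
    exact ⟨hp.2, by simpa using hp.1⟩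
  · intro p hp; simp
  · intro p hp; simp

end aux2

section aux3

/-- The permutation of `Fin (n+1)` sending `0 ↦ p` and `i.succ ↦ p.succAbove (e i)`. -/
def insertPerm {n : ℕ} (p : Fin (n + 1)) (e : Equiv.Perm (Fin n)) :
    Equiv.Perm (Fin (n + 1)) :=
  (finSuccEquiv n).trans ((Equiv.optionCongr e).trans (finSuccEquiv' p).symm)

@[simp] lemma insertPerm_zero {n : ℕ} (p : Fin (n + 1)) (e : Equiv.Perm (Fin n)) :
    insertPerm p e 0 = p := by
  simp [insertPerm, finSuccEquiv_zero, finSuccEquiv'_symm_none]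

@[simp] lemma insertPerm_succ {n : ℕ} (p : Fin (n + 1)) (e : Equiv.Perm (Fin n)) (i : Fin n) :
    insertPerm p e i.succ = p.succAbove (e i) := by
  simp [insertPerm, finSuccEquiv_succ, finSuccEquiv'_symm_some]

lemma insertPerm_bijective {n : ℕ} :
    Function.Bijective (fun q : Fin (n + 1) × Equiv.Perm (Fin n) => insertPerm q.1 q.2) := by
  rw [Fintype.bijective_iff_injective_and_card]
  constructor
  · rintro ⟨p, e⟩ ⟨p', e'⟩ h
    simp only at h
    have hp : p = p' := by
      have := congrArg (fun σ : Equiv.Perm (Fin (n+1)) => σ 0) h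
      simpa using this
    subst hp
    have he : e = e' := by
      ext i
      have := congrArg (fun σ : Equiv.Perm (Fin (n+1)) => σ i.succ) h
      simp only [insertPerm_succ] at this
      exact congrArg Fin.val ((Fin.strictMono_succAbove p).injective this)
    subst he; rfl
  · simp [Fintype.card_perm, Nat.factorial_succ]

lemma sum_insertPerm {M : Type*} [AddCommMonoid M] {n : ℕ}
    (f : Equiv.Perm (Fin (n + 1)) → M) :
    (∑ σ : Equiv.Perm (Fin (n + 1)), f σ)
      = ∑ p : Fin (n + 1), ∑ e : Equiv.Perm (Fin n), f (insertPerm p e) := by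
  have h1 : (∑ q : Fin (n+1) × Equiv.Perm (Fin n), f (insertPerm q.1 q.2))
      = ∑ p : Fin (n + 1), ∑ e : Equiv.Perm (Fin n), f (insertPerm p e) :=
    Fintype.sum_prod_type _
  rw [← h1]
  exact (Fintype.sum_bijective _ insertPerm_bijective _ _ (fun q => rfl)).symm

lemma sum_range_count_lt : ∀ N m : ℕ, m ≤ N →
    (∑ i ∈ Finset.range N, if i < m then (1:ℕ) else 0) = m := by
  intro N
  induction N with
  | zero => intro m hm; simp; omega
  | succ N ih =>
    intro m hm
    rw [Finset.sum_range_succ]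
    by_cases hmN : m ≤ N
    · rw [ih m hmN, if_neg (by omega)]
      simp
    · have hm1 : m = N + 1 := by omega
      subst hm1
      rw [if_pos (by omega)]
      have : (∑ i ∈ Finset.range N, if i < N + 1 then (1:ℕ) else 0)
          = ∑ i ∈ Finset.range N, 1 := by
        refine Finset.sum_congr rfl fun i hi => ?_
        rw [Finset.mem_range] at hi
        exact if_pos (by omega)
      rw [this, Finset.sum_const, smul_eq_mul, mul_one, Finset.card_range]

lemma count_castSucc_lt {n : ℕ} (p : Fin (n + 1)) :
    (∑ z : Fin n, if z.castSucc < p then (1:ℕ) else 0) = p := by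
  have h1 : (∑ z : Fin n, if z.castSucc < p then (1:ℕ) else 0)
      = ∑ i ∈ Finset.range n, if i < (p : ℕ) then (1:ℕ) else 0 := by
    rw [← Fin.sum_univ_eq_sum_range (fun i => if i < (p : ℕ) then (1:ℕ) else 0) n]
    refine Finset.sum_congr rfl fun z _ => ?_
    simp [Fin.lt_def]
  rw [h1]
  exact sum_range_count_lt n p (by omega)

lemma invNum_eq_sum {n : ℕ} (σ : Equiv.Perm (Fin n)) :
    invNum σ = ∑ x : Fin n, ∑ y : Fin n, if x < y ∧ σ y < σ x then 1 else 0 := by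
  rw [invNum, Finset.card_filter, ← Finset.univ_product_univ, Finset.sum_product]

lemma invNum_insertPerm {n : ℕ} (p : Fin (n + 1)) (e : Equiv.Perm (Fin n)) :
    invNum (insertPerm p e) = p + invNum e := by
  set σ := insertPerm p e with hσ
  have hσ0 : σ 0 = p := insertPerm_zero p e
  have hσs : ∀ i : Fin n, σ i.succ = p.succAbove (e i) := fun i => insertPerm_succ p e i
  rw [invNum_eq_sum, Fin.sum_univ_succ]
  have h0 : (∑ y : Fin (n+1), if (0:Fin (n+1)) < y ∧ σ y < σ 0 then 1 else 0) = (p : ℕ) := by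
    rw [Fin.sum_univ_succ]
    have hz : (if (0:Fin (n+1)) < 0 ∧ σ 0 < σ 0 then 1 else 0) = 0 := by simp
    rw [hz, zero_add]
    have hy : ∀ y : Fin n, (if (0:Fin (n+1)) < y.succ ∧ σ y.succ < σ 0 then 1 else 0)
        = (fun z : Fin n => if z.castSucc < p then (1:ℕ) else 0) (e y) := by
      intro y
      simp only [hσ0, hσs, Fin.succ_pos, true_and, Fin.succAbove_lt_iff_castSucc_lt]
    refine (Finset.sum_congr rfl fun y _ => hy y).trans ?_
    exact (Equiv.sum_comp e _).trans (count_castSucc_lt p)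
  have h1 : ∀ x : Fin n, (∑ y : Fin (n+1), if x.succ < y ∧ σ y < σ x.succ then 1 else 0)
      = ∑ y : Fin n, if x < y ∧ e y < e x then 1 else 0 := by
    intro x
    rw [Fin.sum_univ_succ]
    have hz : (if x.succ < 0 ∧ σ 0 < σ x.succ then 1 else 0) = 0 := by
      simp [Fin.not_lt_zero]
    rw [hz, zero_add]
    refine Finset.sum_congr rfl fun y _ => ?_
    simp only [hσs, Fin.succ_lt_succ_iff, Fin.succAbove_lt_succAbove_iff]
  rw [h0]
  simp only [h1]
  rw [← invNum_eq_sum]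

end aux3

section lists

lemma finRange_split {n : ℕ} (j : Fin (n + 1)) :
    List.finRange (n + 1)
      = (List.finRange (n + 1)).take (j : ℕ)
        ++ j :: (List.finRange (n + 1)).drop ((j : ℕ) + 1) := by
  have hlen : (j : ℕ) < (List.finRange (n + 1)).length := by
    rw [List.length_finRange]; omega
  have h1 : (List.finRange (n + 1))[(j : ℕ)] = j := by
    simp [Fin.ext_iff]
  conv_lhs => rw [← List.take_append_drop (j : ℕ) (List.finRange (n + 1))]
  rw [List.drop_eq_getElem_cons hlen, h1]

lemma finRange_take_drop {n : ℕ} (j : Fin (n + 1)) :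
    (List.finRange (n + 1)).take (j : ℕ) ++ (List.finRange (n + 1)).drop ((j : ℕ) + 1)
      = (List.finRange n).map j.succAbove := by
  have hj : (j : ℕ) ≤ n := by omega
  apply List.ext_getElem
  · simp [List.length_finRange]
    omega
  · intro i h1 h2
    rw [List.getElem_append]
    simp only [List.length_take, List.length_finRange, List.length_map] at h1 h2 ⊢
    split_ifs with hlt
    · have hij : i < (j : ℕ) := by omega
      rw [List.getElem_take]
      simp only [List.getElem_finRange, List.getElem_map]
      rw [Fin.succAbove_of_castSucc_lt]
      · apply Fin.ext
        simp
      · rw [Fin.lt_def]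
        simp [hij]
    · have hij : ¬ (i < (j : ℕ)) := by omega
      rw [List.getElem_drop]
      simp only [List.getElem_finRange, List.getElem_map]
      rw [Fin.succAbove_of_le_castSucc]
      · apply Fin.ext
        simp
        omega
      · rw [Fin.le_def]
        simp
        omega

lemma mem_take_finRange {n : ℕ} (j : Fin (n + 1)) (x : Fin (n + 1))
    (hx : x ∈ (List.finRange (n + 1)).take (j : ℕ)) : x < j := by
  obtain ⟨i, hi, rfl⟩ := List.mem_iff_getElem.mp hx
  simp only [List.length_take, List.length_finRange] at hi
  rw [List.getElem_take]
  simp only [List.getElem_finRange]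
  rw [Fin.lt_def]
  simp
  omega

end lists

section pull
variable {A : Type*} [Ring A] [Algebra ℂ A]

lemma pull_left {n : ℕ} {r s : ℂ} (hrs : r * s ≠ 0) {t : Fin n → Fin n → A}
    (h : QRel r s t) (a d : Fin n) :
    ∀ L : List (Fin n × Fin n), (∀ p ∈ L, a < p.1 ∧ p.2 < d) →
      (L.map fun p => t p.1 p.2).prod * t a d
        = ((r * s)⁻¹) ^ L.length • (t a d * (L.map fun p => t p.1 p.2).prod) := by
  intro L
  induction L with
  | nil => intro _; simp
  | cons p L ih =>
    intro hmem
    have hp := hmem p List.mem_cons_self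
    have hL : ∀ q ∈ L, a < q.1 ∧ q.2 < d := fun q hq => hmem q (List.mem_cons_of_mem p hq)
    have hcomm : t p.1 p.2 * t a d = (r * s)⁻¹ • (t a d * t p.1 p.2) := by
      have hc := qrel_comm h hp.1 hp.2
      rw [hc, smul_smul, inv_mul_cancel₀ hrs, one_smul]
    calc ((p :: L).map fun q => t q.1 q.2).prod * t a d
        = t p.1 p.2 * ((L.map fun q => t q.1 q.2).prod * t a d) := by
          simp [mul_assoc]
      _ = t p.1 p.2 * (((r * s)⁻¹) ^ L.length • (t a d * (L.map fun q => t q.1 q.2).prod)) := by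
          rw [ih hL]
      _ = ((r * s)⁻¹) ^ L.length • ((t p.1 p.2 * t a d) * (L.map fun q => t q.1 q.2).prod) := by
          rw [mul_smul_comm, mul_assoc]
      _ = ((r * s)⁻¹) ^ (L.length + 1) • (t a d * ((p :: L).map fun q => t q.1 q.2).prod) := by
          rw [hcomm, smul_mul_assoc, smul_smul, ← pow_succ]
          simp [mul_assoc]
  
end pull

section prodlemmas
variable {A : Type*} [Ring A] [Algebra ℂ A]

lemma prodT_col {n : ℕ} (t : Fin (n+1) → Fin (n+1) → A) (p : Fin (n+1))
    (e : Equiv.Perm (Fin n)) :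
    prodT t id (insertPerm p e)
      = t 0 p * prodT (fun a b => t a.succ (p.succAbove b)) id e := by
  rw [prodT, prodT, List.finRange_succ, List.map_cons, List.prod_cons, List.map_map]
  have h1 : t (id 0) (insertPerm p e 0) = t 0 p := by simp
  rw [h1]
  have h2 : List.map ((fun i => t (id i) ((insertPerm p e) i)) ∘ Fin.succ) (List.finRange n)
      = List.map (fun i => t (id i).succ (p.succAbove (e i))) (List.finRange n) :=
    List.map_congr_left fun i _ => by simp [insertPerm_succ]
  rw [h2]

lemma prodT_row {n : ℕ} {r s : ℂ} (hrs : r * s ≠ 0)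
    {t : Fin (n+1) → Fin (n+1) → A} (h : QRel r s t) (p : Fin (n+1))
    (e : Equiv.Perm (Fin n)) :
    prodT t (⇑(insertPerm p e)⁻¹) id
      = ((r * s)⁻¹) ^ (p : ℕ)
          • (t 0 p * prodT (fun a b => t a.succ (p.succAbove b)) (⇑e⁻¹) id) := by
  set σ := insertPerm p e with hσdef
  have hinv0 : σ⁻¹ p = 0 := by
    rw [← insertPerm_zero p e, ← hσdef, ← Equiv.Perm.mul_apply, inv_mul_cancel, Equiv.Perm.one_apply]
  have hinvs : ∀ k : Fin n, σ⁻¹ (p.succAbove k) = (e⁻¹ k).succ := by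
    intro k
    have : σ ((e⁻¹ k).succ) = p.succAbove k := by
      rw [hσdef, insertPerm_succ]
      congr 1
      rw [← Equiv.Perm.mul_apply, mul_inv_cancel, Equiv.Perm.one_apply]
    rw [← this, ← Equiv.Perm.mul_apply, inv_mul_cancel, Equiv.Perm.one_apply]
  set g : Fin (n+1) → A := fun i => t (σ⁻¹ i) i with hg
  have hprod : prodT t (⇑σ⁻¹) id = ((List.finRange (n+1)).map g).prod := rfl
  rw [hprod]
  conv_lhs => rw [finRange_split p]
  rw [List.map_append, List.prod_append, List.map_cons, List.prod_cons]
  have hgp : g p = t 0 p := by rw [hg]; simp only [hinv0]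
  set T := (List.finRange (n+1)).take (p : ℕ) with hT
  set D := (List.finRange (n+1)).drop ((p : ℕ) + 1) with hD
  -- pull t 0 p through (T.map g).prod
  have hpull : (T.map g).prod * t 0 p
      = ((r * s)⁻¹) ^ (p : ℕ) • (t 0 p * (T.map g).prod) := by
    have hmap : T.map g = (T.map fun i => (σ⁻¹ i, i)).map fun q => t q.1 q.2 := by
      rw [List.map_map]; rfl
    have hlen : (T.map fun i => (σ⁻¹ i, i)).length = (p : ℕ) := by
      rw [List.length_map, hT, List.length_take, List.length_finRange]
      omega
    have hmem : ∀ q ∈ T.map fun i => (σ⁻¹ i, i), (0 : Fin (n+1)) < q.1 ∧ q.2 < p := by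
      intro q hq
      rw [List.mem_map] at hq
      obtain ⟨i, hiT, rfl⟩ := hq
      have hip : i < p := mem_take_finRange p i hiT
      constructor
      · rw [Fin.pos_iff_ne_zero]
        intro h0
        have : i = p := by
          have := congrArg σ h0
          rw [← Equiv.Perm.mul_apply, mul_inv_cancel, Equiv.Perm.one_apply] at this
          rw [this, hσdef, insertPerm_zero]
        exact absurd this (Fin.ne_of_lt hip)
      · exact hip
    rw [hmap, pull_left hrs h 0 p _ hmem, hlen, ← hmap]
  calc (T.map g).prod * (g p * (D.map g).prod)
      = ((T.map g).prod * t 0 p) * (D.map g).prod := by rw [hgp, mul_assoc]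
    _ = (((r * s)⁻¹) ^ (p : ℕ) • (t 0 p * (T.map g).prod)) * (D.map g).prod := by rw [hpull]
    _ = ((r * s)⁻¹) ^ (p : ℕ) • (t 0 p * ((T.map g).prod * (D.map g).prod)) := by
        rw [smul_mul_assoc, mul_assoc]
    _ = ((r * s)⁻¹) ^ (p : ℕ) • (t 0 p * ((T ++ D).map g).prod) := by
        rw [List.map_append, List.prod_append]
    _ = ((r * s)⁻¹) ^ (p : ℕ)
          • (t 0 p * prodT (fun a b => t a.succ (p.succAbove b)) (⇑e⁻¹) id) := by
        rw [hT, hD, finRange_take_drop p, List.map_map, prodT]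
        have hmapeq : List.map (g ∘ p.succAbove) (List.finRange n)
            = List.map (fun k => t ((e⁻¹ k).succ) (p.succAbove k)) (List.finRange n) :=
          List.map_congr_left fun k _ => by
            simp only [Function.comp_apply, hg, hinvs]
        rw [hmapeq]
        simp only [id_eq]

end prodlemmas

section main
variable {A : Type*} [Ring A] [Algebra ℂ A]

theorem key (r s : ℂ) (hr : r ≠ 0) (hs : s ≠ 0) :
    ∀ (n : ℕ) (t : Fin n → Fin n → A), QRel r s t →
      (∑ σ : Equiv.Perm (Fin n), ((-s) ^ invNum σ) • prodT t σ id)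
        = ∑ σ : Equiv.Perm (Fin n), ((-r) ^ (-(invNum σ : ℤ))) • prodT t id σ := by
  intro n
  induction n with
  | zero =>
    intro t ht
    have h1 : ∀ σ : Equiv.Perm (Fin 0), invNum σ = 0 := by
      intro σ
      rw [invNum]
      simp
    have h2 : ∀ σ η : Fin 0 → Fin 0, prodT t σ η = 1 := by
      intro σ η
      rw [prodT]
      simp
    simp [h1, h2]
  | succ n ih =>
    intro t ht
    have hrs : r * s ≠ 0 := mul_ne_zero hr hs
    have hnr : (-r) ≠ 0 := neg_ne_zero.mpr hr
    have stepA : (∑ σ : Equiv.Perm (Fin (n+1)), ((-s) ^ invNum σ) • prodT t σ id)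
        = ∑ σ : Equiv.Perm (Fin (n+1)), ((-s) ^ invNum σ) • prodT t (⇑σ⁻¹) id := by
      refine Fintype.sum_equiv (Equiv.inv (Equiv.Perm (Fin (n+1)))) _ _ fun σ => ?_
      simp only [Equiv.inv_apply, invNum_inv, inv_inv]
    rw [stepA]
    rw [sum_insertPerm (f := fun σ => ((-s) ^ invNum σ) • prodT t (⇑σ⁻¹) id)]
    rw [sum_insertPerm (f := fun σ => ((-r) ^ (-(invNum σ : ℤ))) • prodT t id σ)]
    refine Finset.sum_congr rfl fun p _ => ?_
    set t' : Fin n → Fin n → A := fun a b => t a.succ (p.succAbove b) with ht'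
    have hQ' : QRel r s t' := qrel_comp ht Fin.strictMono_succ (Fin.strictMono_succAbove p)
    have hL : ∀ e : Equiv.Perm (Fin n),
        ((-s) ^ invNum (insertPerm p e)) • prodT t (⇑(insertPerm p e)⁻¹) id
          = ((-r)⁻¹) ^ (p : ℕ) • ((-s) ^ invNum e • (t 0 p * prodT t' (⇑e⁻¹) id)) := by
      intro e
      rw [invNum_insertPerm, prodT_row hrs ht p e, smul_smul, smul_smul]
      congr 1
      have hbase : (-s) * (r * s)⁻¹ = (-r)⁻¹ := by
        field_simp
      calc (-s) ^ ((p : ℕ) + invNum e) * ((r * s)⁻¹) ^ (p : ℕ)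
          = ((-s) * (r * s)⁻¹) ^ (p : ℕ) * (-s) ^ invNum e := by
            rw [pow_add, mul_pow]; ring
        _ = ((-r)⁻¹) ^ (p : ℕ) * (-s) ^ invNum e := by rw [hbase]
    have hR : ∀ e : Equiv.Perm (Fin n),
        ((-r) ^ (-(invNum (insertPerm p e) : ℤ))) • prodT t id (insertPerm p e)
          = ((-r)⁻¹) ^ (p : ℕ) • ((-r) ^ (-(invNum e : ℤ)) • (t 0 p * prodT t' id e)) := by
      intro e
      rw [invNum_insertPerm, prodT_col t p e, smul_smul]
      congr 1
      push_cast
      rw [neg_add, zpow_add₀ hnr]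
      congr 1
      rw [zpow_neg, zpow_natCast, inv_pow]
    simp only [hL, hR]
    rw [← Finset.smul_sum, ← Finset.smul_sum]
    congr 1
    have hre : (∑ e : Equiv.Perm (Fin n), (-s) ^ invNum e • (t 0 p * prodT t' (⇑e⁻¹) id))
        = ∑ e : Equiv.Perm (Fin n), (-s) ^ invNum e • (t 0 p * prodT t' (⇑e) id) := by
      refine Fintype.sum_equiv (Equiv.inv (Equiv.Perm (Fin n))) _ _ fun e => ?_
      simp only [Equiv.inv_apply, invNum_inv, inv_inv]
    rw [hre]
    have hml : (∑ e : Equiv.Perm (Fin n), (-s) ^ invNum e • (t 0 p * prodT t' (⇑e) id))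
        = t 0 p * ∑ e : Equiv.Perm (Fin n), (-s) ^ invNum e • prodT t' (⇑e) id := by
      rw [Finset.mul_sum]
      exact Finset.sum_congr rfl fun e _ => (mul_smul_comm _ _ _).symm
    have hmr : (∑ e : Equiv.Perm (Fin n), (-r) ^ (-(invNum e : ℤ)) • (t 0 p * prodT t' id (⇑e)))
        = t 0 p * ∑ e : Equiv.Perm (Fin n), (-r) ^ (-(invNum e : ℤ)) • prodT t' id (⇑e) := by
      rw [Finset.mul_sum]
      exact Finset.sum_congr rfl fun e _ => (mul_smul_comm _ _ _).symm
    rw [hml, hmr, ih t' hQ']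

end main

/-- in `A(R)`, the row and column expansions of the quantum
determinant agree:
`Σ_{σ∈Sₙ} (-s)^{ℓ(σ)} t_{σ(1),1}⋯t_{σ(n),n}
  = Σ_{σ∈Sₙ} (-r)^{-ℓ(σ)} t_{1,σ(1)}⋯t_{n,σ(n)}`. -/
theorem stmt10 {A : Type*} [Ring A] [Algebra ℂ A] (n : ℕ) (r s : ℂ)
    (hr : r ≠ 0) (hs : s ≠ 0) (t : Fin n → Fin n → A)
    (hRTT : ∀ i j k l : Fin n,
      ∑ a : Fin n, ∑ b : Fin n, Rmat n r s (i, j) (a, b) • (t a k * t b l)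
        = ∑ a : Fin n, ∑ b : Fin n, Rmat n r s (a, b) (k, l) • (t j b * t i a)) :
    ∑ σ : Equiv.Perm (Fin n), ((-s) ^ invNum σ) • prodT t σ id
      = ∑ σ : Equiv.Perm (Fin n), ((-r) ^ (-(invNum σ : ℤ))) • prodT t id σ :=
  key r s hr hs n t (qrel_of_hRTT r s t hRTT)
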